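/- arXiv:1511.04056 — 3 statements merged into one kernel-verified Lean document; each statement's English description precedes it below -/
import Mathlib

section
/- Let m be a positive natural number, let v ∈ ℝ^m, let L : {-1,1}^m → ℝ be any function, and let a, b ∈ ℝ with a > b > 0. Then max_{g ∈ {-1,1}^m} ( a ∑_i g_i v_i + L(g) ) − max_{h ∈ {-1,1}^m} a ∑_i h_i v_i ≤ max_{g ∈ {-1,1}^m} ( b ∑_i g_i v_i + L(g) ) − max_{h ∈ {-1,1}^m} b ∑_i h_i v_i. -/
/-- The hypercube `{-1,1}^m` as a subset of `ℝ^m`. -/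
def Hc (m : ℕ) : Set (Fin m → ℝ) := {h | ∀ i, h i = 1 ∨ h i = -1}

lemma Hc_finite (m : ℕ) : (Hc m).Finite := by
  have : Hc m ⊆ Set.pi Set.univ (fun _ : Fin m => ({1, -1} : Set ℝ)) := by
    intro h hh i _
    rcases hh i with h1 | h1 <;> simp [h1]
  exact Set.Finite.subset (Set.Finite.pi (fun _ => (Set.finite_singleton (-1)).insert 1)) this

lemma Hc_nonempty (m : ℕ) : (Hc m).Nonempty := ⟨fun _ => 1, fun _ => Or.inl rfl⟩

lemma dot_le (m : ℕ) (v : Fin m → ℝ) {g : Fin m → ℝ} (hg : g ∈ Hc m) :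
    ∑ i, g i * v i ≤ ∑ i, |v i| := by
  apply Finset.sum_le_sum
  intro i _
  rcases hg i with h1 | h1 <;> simp [h1] <;> [exact le_abs_self _; exact neg_le_abs _]

lemma sSup_scale (m : ℕ) (v : Fin m → ℝ) (c : ℝ) (hc : 0 < c) :
    sSup ((fun h => c * ∑ i, h i * v i) '' Hc m) = c * ∑ i, |v i| := by
  apply IsGreatest.csSup_eq
  constructor
  · refine ⟨fun i => if 0 ≤ v i then 1 else -1, fun i => by by_cases h : 0 ≤ v i <;> simp [h], ?_⟩
    show c * _ = c * _
    congr 1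
    apply Finset.sum_congr rfl
    intro i _
    by_cases h : 0 ≤ v i
    · simp [h, abs_of_nonneg h]
    · simp only [h, if_false, abs_of_neg (lt_of_not_ge h)]; ring
  · rintro x ⟨g, hg, rfl⟩
    exact mul_le_mul_of_nonneg_left (dot_le m v hg) hc.le

/-- Proposition 1: the structured-prediction upper bound gets tighter as the
scale increases, i.e. for `a > b > 0` the bound at scale `a` is at most the
bound at scale `b`. -/
theorem stmt_4 (m : ℕ) (hm : 0 < m) (v : Fin m → ℝ)
    (L : (Fin m → ℝ) → ℝ) (a b : ℝ) (hba : b < a) (hb : 0 < b) :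
    sSup ((fun g => a * ∑ i, g i * v i + L g) '' Hc m) -
        sSup ((fun h => a * ∑ i, h i * v i) '' Hc m) ≤
      sSup ((fun g => b * ∑ i, g i * v i + L g) '' Hc m) -
        sSup ((fun h => b * ∑ i, h i * v i) '' Hc m) := by
  have ha : (0:ℝ) < a := hb.trans hba
  rw [sSup_scale m v a ha, sSup_scale m v b hb]
  rw [sub_le_sub_iff]
  have hbdd : BddAbove ((fun g => b * ∑ i, g i * v i + L g) '' Hc m) :=
    ((Hc_finite m).image _).bddAbove
  have hne : ((fun g => a * ∑ i, g i * v i + L g) '' Hc m).Nonempty :=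
    (Hc_nonempty m).image _
  rw [show sSup ((fun g => b * ∑ i, g i * v i + L g) '' Hc m) + a * ∑ i, |v i| =
      (sSup ((fun g => b * ∑ i, g i * v i + L g) '' Hc m) + (a - b) * ∑ i, |v i|) + b * ∑ i, |v i|
      by ring]
  gcongr
  apply csSup_le hne
  rintro x ⟨g, hg, rfl⟩
  have h1 : b * ∑ i, g i * v i + L g ≤ sSup ((fun g => b * ∑ i, g i * v i + L g) '' Hc m) :=
    le_csSup hbdd ⟨g, hg, rfl⟩
  have h2 : (a - b) * ∑ i, g i * v i ≤ (a - b) * ∑ i, |v i| :=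
    mul_le_mul_of_nonneg_left (dot_le m v hg) (by linarith)
  simp only
  nlinarith
end

section
/- Let m be a positive natural number, let v ∈ ℝ^m, and let L : {-1,1}^m → ℝ be any function. Then the function F : ℝ → ℝ defined for t > 0 by F(t) = max_{g ∈ {-1,1}^m} ( t ∑_i g_i v_i + L(g) ) − t · max_{h ∈ {-1,1}^m} ∑_i h_i v_i is antitone (monotonically nonincreasing) on the positive reals. -/
/-- Monotone-in-scale reformulation of Proposition 1: the scaled
structured-prediction upper bound
`F t = max_{g} (t ∑ i, g i * v i + L g) − t · max_{h} ∑ i, h i * v i`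
is antitone on the positive reals. -/
theorem stmt_5 (m : ℕ) (hm : 0 < m) (v : Fin m → ℝ)
    (L : (Fin m → ℝ) → ℝ) :
    AntitoneOn
      (fun t : ℝ =>
        sSup ((fun g => t * ∑ i, g i * v i + L g) '' Hc m) -
          t * sSup ((fun h => ∑ i, h i * v i) '' Hc m))
      (Set.Ioi (0 : ℝ)) := by
  have hfin : (Hc m).Finite := by
    have heq : Hc m = Set.pi Set.univ (fun _ : Fin m => ({1, -1} : Set ℝ)) := by
      ext h; simp [Hc, Set.mem_pi]
    rw [heq]
    exact Set.Finite.pi (fun _ => (Set.finite_singleton _).insert _)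
  have hne : (Hc m).Nonempty := ⟨fun _ => 1, fun i => Or.inl rfl⟩
  intro a _ b _ hab
  simp only
  set S := fun g : Fin m → ℝ => ∑ i, g i * v i with hS
  set M := sSup (S '' Hc m) with hM
  have hbdd : ∀ f : (Fin m → ℝ) → ℝ, BddAbove (f '' Hc m) :=
    fun f => (hfin.image f).bddAbove
  have hSM : ∀ g ∈ Hc m, S g ≤ M := fun g hg => le_csSup (hbdd S) ⟨g, hg, rfl⟩
  have key : sSup ((fun g => b * S g + L g) '' Hc m)
      ≤ sSup ((fun g => a * S g + L g) '' Hc m) + (b - a) * M := by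
    apply csSup_le (hne.image _)
    rintro x ⟨g, hg, rfl⟩
    have h1 : a * S g + L g ≤ sSup ((fun g => a * S g + L g) '' Hc m) :=
      le_csSup (hbdd _) ⟨g, hg, rfl⟩
    have h2 : (b - a) * S g ≤ (b - a) * M :=
      mul_le_mul_of_nonneg_left (hSM g hg) (by linarith)
    simp only
    nlinarith
  linarith
end

section
/- Let m be a positive natural number, let v ∈ ℝ^m with v_i ≠ 0 for every i, and let L : {-1,1}^m → ℝ be any function. Define the sign vector s ∈ {-1,1}^m by s_i = 1 if v_i > 0 and s_i = -1 otherwise. Then max_{g ∈ {-1,1}^m} ( t ∑_i g_i v_i + L(g) ) − t · max_{h ∈ {-1,1}^m} ∑_i h_i v_i tends to L(s) as t → +∞. -/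
/-- If no coordinate of `v` is zero, then as the scale `t → +∞`, the scaled
structured-prediction upper bound tends to the loss `L s` itself, where
`s i = 1` if `v i > 0` and `s i = -1` otherwise. -/
theorem stmt_7 (m : ℕ) (hm : 0 < m) (v : Fin m → ℝ)
    (hv : ∀ i, v i ≠ 0) (L : (Fin m → ℝ) → ℝ) :
    Filter.Tendsto
      (fun t : ℝ =>
        sSup ((fun g => t * ∑ i, g i * v i + L g) '' Hc m) -
          t * sSup ((fun h => ∑ i, h i * v i) '' Hc m))
      Filter.atTop
      (nhds (L (fun i => if 0 < v i then 1 else -1))) := by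
  set s : Fin m → ℝ := fun i => if 0 < v i then 1 else -1 with hs_def
  have hsHc : s ∈ Hc m := by
    intro i
    by_cases h : 0 < v i <;> simp [hs_def, h]
  have hsv : ∀ i, s i * v i = |v i| := by
    intro i
    by_cases h : 0 < v i
    · simp [hs_def, h, abs_of_pos h]
    · have hlt : v i < 0 := lt_of_le_of_ne (not_lt.mp h) (hv i)
      simp [hs_def, h, abs_of_neg hlt]
  have hle : ∀ g ∈ Hc m, ∑ i, g i * v i ≤ ∑ i, s i * v i := by
    intro g hg
    apply Finset.sum_le_sum
    intro i _
    rw [hsv i]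
    calc g i * v i ≤ |g i * v i| := le_abs_self _
      _ = |g i| * |v i| := abs_mul _ _
      _ = |v i| := by rcases hg i with h1 | h1 <;> simp [h1]
  have hlt : ∀ g ∈ Hc m, g ≠ s → ∑ i, g i * v i < ∑ i, s i * v i := by
    intro g hg hgs
    obtain ⟨j, hj⟩ : ∃ j, g j ≠ s j := by
      by_contra h
      push_neg at h
      exact hgs (funext h)
    refine Finset.sum_lt_sum (fun i _ => ?_) ⟨j, Finset.mem_univ j, ?_⟩
    · rw [hsv i]
      calc g i * v i ≤ |g i * v i| := le_abs_self _
        _ = |g i| * |v i| := abs_mul _ _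
        _ = |v i| := by rcases hg i with h1 | h1 <;> simp [h1]
    · refine lt_of_le_of_ne ?_ ?_
      · rw [hsv j]
        calc g j * v j ≤ |g j * v j| := le_abs_self _
          _ = |g j| * |v j| := abs_mul _ _
          _ = |v j| := by rcases hg j with h1 | h1 <;> simp [h1]
      · intro heq
        apply hj
        have : (g j - s j) * v j = 0 := by ring_nf; linarith [heq]
        rcases mul_eq_zero.mp this with h0 | h0
        · linarith [sub_eq_zero.mp h0]
        · exact absurd h0 (hv j)
  -- sSup of the plain inner products is ⟨s, v⟩
  have hsup2 : sSup ((fun h => ∑ i, h i * v i) '' Hc m) = ∑ i, s i * v i := by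
    apply IsGreatest.csSup_eq
    constructor
    · exact ⟨s, hsHc, rfl⟩
    · rintro x ⟨g, hg, rfl⟩
      exact hle g hg
  -- eventually, the sup of the shifted function equals t⟨s,v⟩ + L s
  have hev : ∀ᶠ t : ℝ in Filter.atTop,
      sSup ((fun g => t * ∑ i, g i * v i + L g) '' Hc m)
        = t * ∑ i, s i * v i + L s := by
    have key : ∀ᶠ t : ℝ in Filter.atTop, ∀ g ∈ Hc m,
        t * ∑ i, g i * v i + L g ≤ t * ∑ i, s i * v i + L s := by
      rw [Filter.eventually_all_finite (Hc_finite m)]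
      intro g hg
      by_cases hgs : g = s
      · subst hgs; exact Filter.Eventually.of_forall (fun t => le_refl _)
      · have hd : 0 < ∑ i, s i * v i - ∑ i, g i * v i := by
          linarith [hlt g hg hgs]
        rw [Filter.eventually_atTop]
        refine ⟨(L g - L s) / (∑ i, s i * v i - ∑ i, g i * v i), fun t ht => ?_⟩
        rw [div_le_iff₀ hd] at ht
        nlinarith
    filter_upwards [key] with t ht
    apply IsGreatest.csSup_eq
    exact ⟨⟨s, hsHc, rfl⟩, by rintro x ⟨g, hg, rfl⟩; exact ht g hg⟩
  have : ∀ᶠ t : ℝ in Filter.atTop,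
      (sSup ((fun g => t * ∑ i, g i * v i + L g) '' Hc m) -
        t * sSup ((fun h => ∑ i, h i * v i) '' Hc m)) = L s := by
    filter_upwards [hev] with t ht
    rw [ht, hsup2]; ring
  exact Filter.Tendsto.congr' (this.mono fun t h => h.symm) tendsto_const_nhds
end
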